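/- Let G be a group with a chain of normal subgroups 1 = R_0 ≤ R_1 ≤ … ≤ R_k, each R_i normal in G, such that for every i = 1,…,k the image of R_i in G/R_{i-1} is exactly the set of nil-elements of G/R_{i-1}. Then every element g ∈ R_k that does not lie in R_{k-1} is a quasi-nil element of G whose minimal nil-order is exactly k, i.e., g is quasi-nil of order ≤ k but not quasi-nil of order ≤ k−1. -/

import Mathlib

/-- Engel words with the convention of the paper: the commutator is
`[x, y] = x⁻¹ * y⁻¹ * x * y`, `engelWord 0 x y = x` and
`engelWord (n+1) x y = [engelWord n x y, y]`; thus for `n ≥ 1`,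
`engelWord n x y` is the Engel word `e_n(x, y)`. -/
def engelWord {G : Type*} [Group G] : ℕ → G → G → G
  | 0, x, _ => x
  | n + 1, x, y => (engelWord n x y)⁻¹ * y⁻¹ * engelWord n x y * y

/-- Iterated Engel words: `epsEngel [(n₁,a₁),…,(n_k,a_k)] y` is
`ε_{(n₁,…,n_k)}(a₁,…,a_k; y)`, defined by `ε_{(n₁)}(a₁;y) = e_{n₁}(a₁,y)` and
`ε_{(n₁,…,n_k)}(a₁,…,a_k;y) = e_{n_k}(a_k, ε_{(n₁,…,n_{k-1})}(a₁,…,a_{k-1};y))`. -/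
def epsEngel {G : Type*} [Group G] (l : List (ℕ × G)) (y : G) : G :=
  l.foldl (fun z p => engelWord p.1 p.2 z) y

/-- `g` is a nil-element if for every `a` there is `n ≥ 1` with `e_n(a, g) = 1`. -/
def IsNilElement {G : Type*} [Group G] (g : G) : Prop :=
  ∀ a : G, ∃ n, 1 ≤ n ∧ engelWord n a g = 1

/-- A group is locally nilpotent if every finitely generated subgroup is nilpotent. -/
def LocallyNilpotent (G : Type*) [Group G] : Prop :=
  ∀ H : Subgroup G, H.FG → Group.IsNilpotent H

/-- `g` is quasi-nil of order ≤ `k`: there are functions `ν i : G^(i+1) → ℕ` (with values ≥ 1,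
`ν i` depending only on `a₁,…,a_{i+1}` and `g`) such that for all `a : Fin k → G`,
`ε_{(ν₁(a₁),…,ν_k(a₁,…,a_k))}(a₁,…,a_k; g) = 1`. -/
def IsQuasiNilOfOrder {G : Type*} [Group G] (k : ℕ) (g : G) : Prop :=
  ∃ ν : ∀ i : Fin k, (Fin ((i : ℕ) + 1) → G) → ℕ,
    (∀ i f, 1 ≤ ν i f) ∧
    ∀ a : Fin k → G,
      epsEngel (List.ofFn fun i : Fin k =>
        (ν i fun j => a (Fin.castLE i.isLt j), a i)) g = 1

/-- `g` is quasi-nil if it is quasi-nil of order ≤ `k` for some `k ≥ 1`. -/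
def IsQuasiNil {G : Type*} [Group G] (g : G) : Prop :=
  ∃ k, 1 ≤ k ∧ IsQuasiNilOfOrder k g

/-- `g` maps to a nil-element of the quotient `G ⧸ N` (for `N` normal). -/
def IsNilElementQuot {G : Type*} [Group G] (N : Subgroup G) (hN : N.Normal) (g : G) : Prop :=
  @IsNilElement (G ⧸ N) (@QuotientGroup.Quotient.group G _ N hN) (QuotientGroup.mk g)

/-- given a chain of normal subgroups `1 = R₀ ≤ R₁ ≤ … ≤ R_k` of `G`
such that the image of `R_i` in `G/R_{i-1}` is exactly the set of nil-elements of
`G/R_{i-1}`, every `g ∈ R_k \ R_{k-1}` is quasi-nil of order ≤ `k` but not of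
order ≤ `k - 1`. -/
lemma map_engelWord {G H : Type*} [Group G] [Group H] (f : G →* H) (n : ℕ) (x y : G) :
    f (engelWord n x y) = engelWord n (f x) (f y) := by
  induction n with
  | zero => rfl
  | succ n ih => simp [engelWord, ih]

lemma isNilElementQuot_iff {G : Type*} [Group G] (N : Subgroup G) (hN : N.Normal) (w : G) :
    IsNilElementQuot N hN w ↔ ∀ b : G, ∃ n, 1 ≤ n ∧ engelWord n b w ∈ N := by
  haveI := hN
  constructor
  · intro h b
    obtain ⟨n, hn, he⟩ := h (QuotientGroup.mk b)
    refine ⟨n, hn, ?_⟩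
    have hm := map_engelWord (QuotientGroup.mk' N) n b w
    simp only [QuotientGroup.mk'_apply] at hm
    rw [← QuotientGroup.eq_one_iff (N := N), hm, he]
  · intro h ab
    obtain ⟨b, rfl⟩ := QuotientGroup.mk_surjective ab
    obtain ⟨n, hn, he⟩ := h b
    refine ⟨n, hn, ?_⟩
    have hm := map_engelWord (QuotientGroup.mk' N) n b w
    simp only [QuotientGroup.mk'_apply] at hm
    rw [← hm, QuotientGroup.eq_one_iff]
    exact he

lemma epsEngel_cons {G : Type*} [Group G] (p : ℕ × G) (l : List (ℕ × G)) (y : G) :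
    epsEngel (p :: l) y = epsEngel l (engelWord p.1 p.2 y) := rfl

lemma lemB {G : Type*} [Group G] (k : ℕ) (R : Fin (k + 1) → Subgroup G)
    (hbot : R 0 = ⊥) (hnorm : ∀ i, (R i).Normal)
    (hnil : ∀ i : Fin k, ∀ g : G,
      IsNilElementQuot (R i.castSucc) (hnorm i.castSucc) g ↔ g ∈ R i.succ) :
    ∀ m (hm : m ≤ k) (g : G), g ∈ R ⟨m, by omega⟩ → IsQuasiNilOfOrder m g := by
  intro m
  induction m with
  | zero =>
    intro hm g hg
    rw [Fin.mk_zero, hbot, Subgroup.mem_bot] at hg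
    refine ⟨fun i => i.elim0, fun i => i.elim0, fun a => ?_⟩
    simp [epsEngel, hg]
  | succ m ih =>
    intro hm g hg
    have hmk : m < k := by omega
    have hnilg : ∀ b : G, ∃ n, 1 ≤ n ∧ engelWord n b g ∈ R ⟨m, by omega⟩ := by
      have := (hnil ⟨m, hmk⟩ g).mpr
      rw [isNilElementQuot_iff] at this
      exact this hg
    choose n₀ hn₀pos hn₀mem using hnilg
    have F : ∀ b : G, IsQuasiNilOfOrder m (engelWord (n₀ b) b g) :=
      fun b => ih (by omega) _ (hn₀mem b)
    choose ν' hν'pos hν'eq using F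
    refine ⟨fun i => Fin.cases (motive := fun i : Fin (m+1) => (Fin ((i : ℕ) + 1) → G) → ℕ)
        (fun f => n₀ (f 0)) (fun i' f => ν' (f 0) i' (fun j => f j.succ)) i, ?_, ?_⟩
    · intro i f
      induction i using Fin.cases with
      | zero => exact hn₀pos (f 0)
      | succ i' => exact hν'pos (f 0) i' (fun j => f j.succ)
    · intro a
      rw [List.ofFn_succ, epsEngel_cons]
      simp only [Fin.cases_zero, Fin.cases_succ]
      have key := hν'eq (a 0) (fun i' => a i'.succ)
      convert key using 2
      · simp only [Fin.castLE_zero]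
        rfl
      · simp only [Fin.castLE_zero]

lemma lemA {G : Type*} [Group G] (k : ℕ) (R : Fin (k + 1) → Subgroup G)
    (hnorm : ∀ i, (R i).Normal)
    (hnil : ∀ i : Fin k, ∀ g : G,
      IsNilElementQuot (R i.castSucc) (hnorm i.castSucc) g ↔ g ∈ R i.succ) (j : ℕ) :
    ∀ m (h : m + j ≤ k) (g : G),
      (∃ ν : ∀ i : Fin m, (Fin ((i : ℕ) + 1) → G) → ℕ,
        (∀ i f, 1 ≤ ν i f) ∧
        ∀ a : Fin m → G,
          epsEngel (List.ofFn fun i : Fin m =>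
            (ν i fun j' => a (Fin.castLE i.isLt j'), a i)) g ∈ R ⟨j, by omega⟩) →
      g ∈ R ⟨m + j, by omega⟩ := by
  intro m
  induction m with
  | zero =>
    intro h g ⟨ν, hν, hall⟩
    have := hall Fin.elim0
    simpa [epsEngel] using this
  | succ m ih =>
    intro h g ⟨ν, hν, hall⟩
    have hmjk : m + j < k := by omega
    -- for each b, the "head" Engel word lands in R ⟨m + j⟩ by the IH
    have hw : ∀ b : G, ∃ n, 1 ≤ n ∧ engelWord n b g ∈ R ⟨m + j, by omega⟩ := by
      intro b
      refine ⟨ν 0 (fun _ => b), hν _ _, ?_⟩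
      refine ih (by omega) _ ⟨fun i' f => ν i'.succ (Fin.cons b f), fun i' f => hν _ _, ?_⟩
      intro a'
      have key := hall (Fin.cons b a')
      rw [List.ofFn_succ, epsEngel_cons] at key
      convert key using 2
      · congr 1
        funext i'
        beta_reduce
        congr 2
        funext j'
        induction j' using Fin.cases with
        | zero => rfl
        | succ j'' => rfl
      · congr 1
        congr 1
        funext j'
        have hj := j'.isLt
        simp only [Fin.val_zero] at hj
        have hz : Fin.castLE (Fin.isLt (0 : Fin (m+1))) j' = 0 := by
          ext
          simp only [Fin.coe_castLE, Fin.val_zero]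
          show (j' : ℕ) = 0
          omega
        rw [hz, Fin.cons_zero]
    have : IsNilElementQuot (R (⟨m + j, hmjk⟩ : Fin k).castSucc)
        (hnorm _) g := by
      rw [isNilElementQuot_iff]
      exact hw
    have hmem := (hnil ⟨m + j, hmjk⟩ g).mp this
    have he : ((⟨m + j, hmjk⟩ : Fin k).succ : Fin (k+1)) = ⟨m + 1 + j, by omega⟩ := by
      ext
      simp only [Fin.val_succ]
      omega
    rw [he] at hmem
    exact hmem

theorem quasiNil_order_of_radical_chain {G : Type*} [Group G] (k : ℕ) (hk : 1 ≤ k)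
    (R : Fin (k + 1) → Subgroup G) (hbot : R 0 = ⊥)
    (hnorm : ∀ i, (R i).Normal)
    (hmono : ∀ i : Fin k, R i.castSucc ≤ R i.succ)
    (hnil : ∀ i : Fin k, ∀ g : G,
      IsNilElementQuot (R i.castSucc) (hnorm i.castSucc) g ↔ g ∈ R i.succ)
    (g : G) (hgk : g ∈ R (Fin.last k)) (hgk' : g ∉ R ⟨k - 1, by omega⟩) :
    IsQuasiNilOfOrder k g ∧ ¬ IsQuasiNilOfOrder (k - 1) g := by
  constructor
  · exact lemB k R hbot hnorm hnil k le_rfl g hgk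
  · intro hq
    obtain ⟨ν, hν, hall⟩ := hq
    have hg' : g ∈ R ⟨k - 1 + 0, by omega⟩ := by
      apply lemA k R hnorm hnil 0 (k - 1) (by omega) g
      refine ⟨ν, hν, fun a => ?_⟩
      rw [hall a]
      exact one_mem _
    exact hgk' hg'
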